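/- Every n-vertex d-degenerate graph with n ≥ d has at most 2^d (n - d + 1) cliques (including the empty set). -/

import Mathlib

/-- A graph is `d`-degenerate if every nonempty induced subgraph has a vertex of degree
at most `d`. -/
def Degenerate {V : Type*} [DecidableEq V] (G : SimpleGraph V) [DecidableRel G.Adj]
    (d : ℕ) : Prop :=
  ∀ X : Finset V, X.Nonempty → ∃ v ∈ X, (X.filter (fun u => G.Adj v u)).card ≤ d

open Classical in
lemma clique_count_aux {V : Type*} [DecidableEq V] (G : SimpleGraph V) [DecidableRel G.Adj]
    (d : ℕ) (hdeg : Degenerate G d) :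
    ∀ X : Finset V, d ≤ X.card →
      (X.powerset.filter (fun s : Finset V => G.IsClique (s : Set V))).card
        ≤ 2 ^ d * (X.card - d + 1) := by
  intro X
  induction X using Finset.strongInduction with
  | _ X ih =>
    intro hd
    rcases eq_or_lt_of_le hd with heq | hlt
    · calc (X.powerset.filter (fun s : Finset V => G.IsClique (s : Set V))).card
          ≤ X.powerset.card := Finset.card_filter_le _ _
        _ = 2 ^ d := by rw [Finset.card_powerset, heq]
        _ ≤ 2 ^ d * (X.card - d + 1) := Nat.le_mul_of_pos_right _ (by omega)
    · have hX : X.Nonempty := Finset.card_pos.mp (by omega)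
      obtain ⟨v, hv, hN⟩ := hdeg X hX
      set S := X.powerset.filter (fun s : Finset V => G.IsClique (s : Set V)) with hS
      have hsplit : S.card = (S.filter (fun s => v ∈ s)).card
          + (S.filter (fun s => v ∉ s)).card :=
        (Finset.card_filter_add_card_filter_not (fun s => v ∈ s)).symm
      -- cliques not containing v
      have h1 : (S.filter (fun s => v ∉ s)).card ≤ 2 ^ d * ((X.erase v).card - d + 1) := by
        refine le_trans (Finset.card_le_card ?_) (ih (X.erase v)
          (Finset.erase_ssubset hv) ?_)
        · intro s hs
          simp only [hS, Finset.mem_filter, Finset.mem_powerset] at hs ⊢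
          exact ⟨fun u hu => Finset.mem_erase.mpr ⟨fun h => hs.2 (h ▸ hu), hs.1.1 hu⟩, hs.1.2⟩
        · rw [Finset.card_erase_of_mem hv]; omega
      -- cliques containing v
      have h2 : (S.filter (fun s => v ∈ s)).card ≤ 2 ^ d := by
        have hinj : ((S.filter (fun s => v ∈ s))).card ≤
            ((X.filter (fun u => G.Adj v u)).powerset).card := by
          apply Finset.card_le_card_of_injOn (fun s : Finset V => s.erase v)
          · intro s hs
            simp only [hS, Finset.mem_coe, Finset.mem_filter, Finset.mem_powerset] at hs ⊢
            intro u hu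
            obtain ⟨hune, hus⟩ := Finset.mem_erase.mp hu
            refine Finset.mem_filter.mpr ⟨hs.1.1 hus, ?_⟩
            exact hs.1.2 (by exact_mod_cast hs.2) (by exact_mod_cast hus) (Ne.symm hune)
          · intro s hs t ht hst
            have hvs : v ∈ s := (Finset.mem_filter.mp hs).2
            have hvt : v ∈ t := (Finset.mem_filter.mp ht).2
            simp only at hst
            rw [← Finset.insert_erase hvs, ← Finset.insert_erase hvt, hst]
        calc (S.filter (fun s => v ∈ s)).card
            ≤ 2 ^ (X.filter (fun u => G.Adj v u)).card := by
              rwa [Finset.card_powerset] at hinj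
          _ ≤ 2 ^ d := Nat.pow_le_pow_right (by norm_num) hN
      rw [Finset.card_erase_of_mem hv] at h1
      have harith : 2 ^ d + 2 ^ d * (X.card - 1 - d + 1) = 2 ^ d * (X.card - d + 1) := by
        have h : X.card - 1 - d + 1 + 1 = X.card - d + 1 := by omega
        rw [← h, Nat.mul_add, Nat.mul_add, Nat.mul_one]; ring
      omega

/-- Every `n`-vertex `d`-degenerate graph with `n ≥ d` has at most `2^d * (n - d + 1)`
cliques (including the empty set). -/
theorem clique_count_of_degenerate {V : Type*} [Fintype V] [DecidableEq V]
    (G : SimpleGraph V) [DecidableRel G.Adj] {d n : ℕ}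
    (hn : Fintype.card V = n) (hdn : d ≤ n) (hdeg : Degenerate G d) :
    Nat.card {s : Finset V // G.IsClique (s : Set V)} ≤ 2 ^ d * (n - d + 1) := by
  classical
  have key := clique_count_aux G d hdeg Finset.univ (by rw [Finset.card_univ, hn]; exact hdn)
  rw [Finset.card_univ, hn] at key
  calc Nat.card {s : Finset V // G.IsClique (s : Set V)}
      = ((Finset.univ : Finset V).powerset.filter
          (fun s : Finset V => G.IsClique (s : Set V))).card := by
        rw [Nat.card_eq_fintype_card, Fintype.card_subtype, Finset.powerset_univ]
    _ ≤ 2 ^ d * (n - d + 1) := key
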